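/- Let k be a field, C a small category, and X : C ⥤ Vect_k a functor with finite-dimensional values, and let Eňd(X) denote the coend of the bifunctor (A,B) ↦ Hom_k(X(A), X(B)), with canonical maps End_k(X(C)) → Eňd(X), h ↦ [h]. There is a unique coalgebra structure (Δ, ε) on Eňd(X) such that each canonical map End_k(X(C)) → Eňd(X) is a morphism of coalgebras, where End_k(V) for a finite-dimensional space V carries its standard matrix coalgebra structure Δ(e^i_j) = Σ_k e^i_k ⊗ e^k_j with counit the trace (for a basis e_1,…,e_n of V and e^i_j = e_i* ⊗ e_j). In particular Δ[e^i_j] = Σ_k [e^i_k] ⊗ [e^k_j] and ε[h] = Tr(h). -/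

import Mathlib

open CategoryTheory
open scoped Classical DirectSum TensorProduct

universe u

noncomputable section

variable (k : Type u) [Field k]

/-- The standard matrix-coalgebra comultiplication on `End_k(V)` for a finite-dimensional
space `V`: with respect to a basis `e_1, …, e_n` and `e^i_j = e_i* ⊗ e_j`, it is
`Δ(e^i_j) = Σ_l e^i_l ⊗ e^l_j`. -/
def matrixComul (V : Type u) [AddCommGroup V] [Module k V] [FiniteDimensional k V] :
    (V →ₗ[k] V) →ₗ[k] ((V →ₗ[k] V) ⊗[k] (V →ₗ[k] V)) :=
  let b := Module.finBasis k V
  ∑ i, ∑ j, ∑ l,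
    LinearMap.smulRight ((b.coord j) ∘ₗ LinearMap.applyₗ (b i))
      ((LinearMap.smulRight (b.coord i) (b l)) ⊗ₜ[k] (LinearMap.smulRight (b.coord l) (b j)))

set_option linter.unusedSectionVars false
set_option maxHeartbeats 1000000

section TannHelpers
namespace Tann

variable {k}
variable {V : Type u} [AddCommGroup V] [Module k V] [FiniteDimensional k V]
variable {W : Type u} [AddCommGroup W] [Module k W] [FiniteDimensional k W]

lemma sum_comm4 {M : Type*} [AddCommMonoid M] {ι₁ ι₂ ι₃ ι₄ : Type*}
    [Fintype ι₁] [Fintype ι₂] [Fintype ι₃] [Fintype ι₄] (F : ι₁ → ι₂ → ι₃ → ι₄ → M) :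
    ∑ a, ∑ b, ∑ c, ∑ d, F a b c d = ∑ c, ∑ d, ∑ b, ∑ a, F a b c d := by
  calc ∑ a, ∑ b, ∑ c, ∑ d, F a b c d
      = ∑ b, ∑ a, ∑ c, ∑ d, F a b c d := Finset.sum_comm
    _ = ∑ b, ∑ c, ∑ a, ∑ d, F a b c d :=
        Finset.sum_congr rfl fun b _ => Finset.sum_comm
    _ = ∑ c, ∑ b, ∑ a, ∑ d, F a b c d := Finset.sum_comm
    _ = ∑ c, ∑ b, ∑ d, ∑ a, F a b c d :=
        Finset.sum_congr rfl fun c _ => Finset.sum_congr rfl fun b _ => Finset.sum_comm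
    _ = ∑ c, ∑ d, ∑ b, ∑ a, F a b c d :=
        Finset.sum_congr rfl fun c _ => Finset.sum_comm

-- expansion of a functional in coordinates
lemma coord_expand {ι : Type*} [Fintype ι] (b : Module.Basis ι k V) (φ : V →ₗ[k] k) :
    ∑ i, φ (b i) • b.coord i = φ := by
  ext v
  simp only [LinearMap.sum_apply, LinearMap.smul_apply, Module.Basis.coord_apply, smul_eq_mul]
  conv_rhs => rw [← b.sum_repr v]
  rw [map_sum]
  simp [mul_comm]

lemma trace_sr (φ : V →ₗ[k] k) (x : V) :
    LinearMap.trace k V (LinearMap.smulRight φ x) = φ x := by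
  have : LinearMap.smulRight φ x = dualTensorHom k V V (φ ⊗ₜ x) := by
    ext v; simp
  rw [this, LinearMap.trace_eq_contract_apply, contractLeft_apply]

lemma sr_comp {U : Type u} [AddCommGroup U] [Module k U]
    (φ : W →ₗ[k] k) (x : V) (g : U →ₗ[k] W) :
    (LinearMap.smulRight φ x) ∘ₗ g = LinearMap.smulRight (φ ∘ₗ g) x := by ext v; simp

lemma comp_sr {U : Type u} [AddCommGroup U] [Module k U]
    (φ : W →ₗ[k] k) (x : V) (g : V →ₗ[k] U) :
    g ∘ₗ (LinearMap.smulRight φ x) = LinearMap.smulRight φ (g x) := by ext v; simp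

lemma sr_smul (φ : W →ₗ[k] k) (c : k) (x : V) :
    LinearMap.smulRight φ (c • x) = c • LinearMap.smulRight φ x := by
  ext v
  simp only [LinearMap.smulRight_apply, LinearMap.smul_apply]
  rw [smul_comm]

lemma sum_smul_sr_right {ι : Type*} [Fintype ι] (φ : W →ₗ[k] k) (c : ι → k) (x : ι → V) :
    ∑ j, c j • LinearMap.smulRight φ (x j) = LinearMap.smulRight φ (∑ j, c j • x j) := by
  ext v
  simp only [LinearMap.sum_apply, LinearMap.smul_apply, LinearMap.smulRight_apply,
    Finset.smul_sum]
  exact Finset.sum_congr rfl fun j _ => smul_comm _ _ _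

lemma sum_smul_sr_left {ι : Type*} [Fintype ι] (φ : ι → (W →ₗ[k] k)) (c : ι → k) (x : V) :
    ∑ i, c i • LinearMap.smulRight (φ i) x = LinearMap.smulRight (∑ i, c i • φ i) x := by
  ext v; simp [Finset.sum_smul, smul_smul]

-- double expansion of a rank-one map in two bases
lemma sr_expand {ι κ : Type*} [Fintype ι] [Fintype κ]
    (b : Module.Basis ι k W) (a : Module.Basis κ k V) (φ : W →ₗ[k] k) (x : V) :
    LinearMap.smulRight φ x =
      ∑ n, ∑ m, (φ (b n) * a.coord m x) • LinearMap.smulRight (b.coord n) (a m) := by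
  ext w
  simp only [LinearMap.smulRight_apply, LinearMap.sum_apply, LinearMap.smul_apply,
    Module.Basis.coord_apply]
  have key : ∀ (n : ι) (m : κ), (φ (b n) * (a.repr x) m) • ((b.repr w) n • a m)
      = ((b.repr w) n * φ (b n)) • ((a.repr x) m • a m) := by
    intro n m
    rw [smul_smul, smul_smul]
    congr 1
    ring
  simp_rw [key, ← Finset.smul_sum]
  rw [a.sum_repr x, ← Finset.sum_smul]
  congr 1
  conv_lhs => rw [← b.sum_repr w]
  rw [map_sum]
  simp [mul_comm]


section MC
open LinearMap
local notation "b" => Module.finBasis k V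
local notation "n𝕍" => Module.finrank k V

lemma matrixComul_apply (h : V →ₗ[k] V) :
    matrixComul k V h = ∑ i, ∑ j, ∑ l, ((b).coord j (h (b i))) •
      ((LinearMap.smulRight ((b).coord i) (b l)) ⊗ₜ[k]
        (LinearMap.smulRight ((b).coord l) (b j))) := by
  simp [matrixComul, LinearMap.sum_apply, LinearMap.smulRight_apply]

lemma matrixComul_eq_A (h : V →ₗ[k] V) :
    matrixComul k V h = ∑ i, ∑ l,
      (LinearMap.smulRight ((b).coord i) (b l)) ⊗ₜ[k]
        (h ∘ₗ LinearMap.smulRight ((b).coord l) (b i)) := by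
  rw [matrixComul_apply]
  refine Finset.sum_congr rfl fun i _ => ?_
  rw [Finset.sum_comm]
  refine Finset.sum_congr rfl fun l _ => ?_
  simp_rw [← TensorProduct.tmul_smul, ← TensorProduct.tmul_sum]
  congr 1
  rw [comp_sr, sum_smul_sr_right]
  congr 1
  simp_rw [Module.Basis.coord_apply]
  exact (b).sum_repr _

lemma matrixComul_eq_B (h : V →ₗ[k] V) :
    matrixComul k V h = ∑ j, ∑ l,
      ((LinearMap.smulRight ((b).coord j) (b l)) ∘ₗ h) ⊗ₜ[k]
        (LinearMap.smulRight ((b).coord l) (b j)) := by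
  rw [matrixComul_apply, Finset.sum_comm]
  refine Finset.sum_congr rfl fun j _ => ?_
  rw [Finset.sum_comm]
  refine Finset.sum_congr rfl fun l _ => ?_
  simp_rw [TensorProduct.smul_tmul', ← TensorProduct.sum_tmul]
  congr 1
  rw [sum_smul_sr_left, sr_comp]
  congr 1
  exact coord_expand (b) ((b).coord j ∘ₗ h)

lemma matrixComul_comp_sr (g : V →ₗ[k] V) (l i : Fin (Module.finrank k V)) :
    matrixComul k V (g ∘ₗ LinearMap.smulRight ((b).coord l) (b i)) =
      ∑ q, (LinearMap.smulRight ((b).coord l) (b q)) ⊗ₜ[k]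
        (g ∘ₗ LinearMap.smulRight ((b).coord q) (b i)) := by
  rw [matrixComul_eq_A]
  have hcomp : ∀ p q : Fin (Module.finrank k V),
      (g ∘ₗ LinearMap.smulRight ((b).coord l) (b i)) ∘ₗ
        LinearMap.smulRight ((b).coord q) (b p)
      = ((b).repr (b p)) l • (g ∘ₗ LinearMap.smulRight ((b).coord q) (b i)) := by
    intro p q
    rw [LinearMap.comp_assoc, comp_sr, LinearMap.smulRight_apply, sr_smul,
      Module.Basis.coord_apply]
    ext v
    simp only [LinearMap.comp_apply, LinearMap.smul_apply, map_smul]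
  simp_rw [hcomp, TensorProduct.tmul_smul]
  simp [Module.Basis.repr_self, Finsupp.single_apply]

lemma end_expand (h : V →ₗ[k] V) :
    ∑ i, ∑ j, ((b).coord j (h (b i))) •
      LinearMap.smulRight ((b).coord i) (b j) = h := by
  ext v
  simp only [LinearMap.sum_apply, LinearMap.smul_apply, LinearMap.smulRight_apply,
    Module.Basis.coord_apply]
  have step : ∀ i, ∑ j, ((b).repr (h (b i))) j • (((b).repr v) i • b j)
      = ((b).repr v) i • h (b i) := by
    intro i
    rw [Finset.sum_congr rfl (fun j _ => smul_comm _ _ _), ← Finset.smul_sum,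
      (b).sum_repr]
  simp_rw [step, ← map_smul, ← map_sum, (b).sum_repr]

lemma matrixComul_sr (i l : Fin (Module.finrank k V)) :
    matrixComul k V (LinearMap.smulRight ((b).coord i) (b l)) =
      ∑ q, (LinearMap.smulRight ((b).coord i) (b q)) ⊗ₜ[k]
        (LinearMap.smulRight ((b).coord q) (b l)) := by
  have := matrixComul_comp_sr (LinearMap.id (R := k) (M := V)) i l
  simpa only [LinearMap.id_comp] using this

lemma matrix_coassoc :
    (TensorProduct.assoc k (V →ₗ[k] V) (V →ₗ[k] V) (V →ₗ[k] V)).toLinearMap ∘ₗ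
        TensorProduct.map (matrixComul k V) LinearMap.id ∘ₗ matrixComul k V =
      TensorProduct.map LinearMap.id (matrixComul k V) ∘ₗ matrixComul k V := by
  refine LinearMap.ext fun h => ?_
  simp only [LinearMap.comp_apply]
  rw [matrixComul_eq_A h]
  simp only [map_sum, TensorProduct.map_tmul, LinearMap.id_coe, id_eq]
  simp_rw [matrixComul_comp_sr, matrixComul_sr]
  simp only [TensorProduct.sum_tmul, TensorProduct.tmul_sum, map_sum,
    TensorProduct.assoc_tmul]
  exact Finset.sum_congr rfl fun i _ => Finset.sum_comm

lemma matrix_counit_left :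
    (TensorProduct.lid k (V →ₗ[k] V)).toLinearMap ∘ₗ
        TensorProduct.map (LinearMap.trace k V) LinearMap.id ∘ₗ matrixComul k V =
      LinearMap.id := by
  refine LinearMap.ext fun h => ?_
  simp only [LinearMap.comp_apply]
  rw [matrixComul_eq_B h]
  simp only [map_sum, TensorProduct.map_tmul, LinearMap.id_coe, id_eq]
  have e : ∀ j l : Fin (Module.finrank k V),
      LinearMap.trace k V ((LinearMap.smulRight ((b).coord j) (b l)) ∘ₗ h)
        = (b).coord j (h (b l)) := by
    intro j l
    rw [sr_comp, trace_sr, LinearMap.comp_apply]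
  simp_rw [e]
  simp only [LinearEquiv.coe_coe, TensorProduct.lid_tmul]
  rw [Finset.sum_comm]
  exact end_expand h

lemma matrix_counit_right :
    (TensorProduct.rid k (V →ₗ[k] V)).toLinearMap ∘ₗ
        TensorProduct.map LinearMap.id (LinearMap.trace k V) ∘ₗ matrixComul k V =
      LinearMap.id := by
  refine LinearMap.ext fun h => ?_
  simp only [LinearMap.comp_apply]
  rw [matrixComul_eq_A h]
  simp only [map_sum, TensorProduct.map_tmul, LinearMap.id_coe, id_eq]
  have e : ∀ i l : Fin (Module.finrank k V),
      LinearMap.trace k V (h ∘ₗ LinearMap.smulRight ((b).coord l) (b i))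
        = (b).coord l (h (b i)) := by
    intro i l
    rw [comp_sr, trace_sr]
  simp_rw [e]
  simp only [LinearEquiv.coe_coe, TensorProduct.rid_tmul]
  exact end_expand h

end MC

-- the key exchange identity, pre-quotient
lemma exchange {ι κ : Type*} [Fintype ι] [Fintype κ] (a : Module.Basis κ k V) (b : Module.Basis ι k W)
    (u : W →ₗ[k] V) (v : V →ₗ[k] W) :
    ∑ j, ∑ l, (LinearMap.smulRight (a.coord j ∘ₗ u) (v (a l))) ⊗ₜ[k]
        (LinearMap.smulRight (a.coord l) (a j))
    = ∑ m, ∑ n, (LinearMap.smulRight (b.coord m) (b n)) ⊗ₜ[k]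
        (LinearMap.smulRight (b.coord n ∘ₗ v) (u (b m))) := by
  have hL : ∑ j, ∑ l, (LinearMap.smulRight (a.coord j ∘ₗ u) (v (a l))) ⊗ₜ[k]
        (LinearMap.smulRight (a.coord l) (a j))
      = ∑ j, ∑ l, ∑ n, ∑ m,
          ((a.coord j) (u (b n)) * (b.coord m) (v (a l))) •
            ((LinearMap.smulRight (b.coord n) (b m)) ⊗ₜ[k]
              (LinearMap.smulRight (a.coord l) (a j))) := by
    refine Finset.sum_congr rfl fun j _ => Finset.sum_congr rfl fun l _ => ?_
    rw [sr_expand b b (a.coord j ∘ₗ u) (v (a l)), TensorProduct.sum_tmul]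
    refine Finset.sum_congr rfl fun n _ => ?_
    rw [TensorProduct.sum_tmul]
    refine Finset.sum_congr rfl fun m _ => ?_
    rw [TensorProduct.smul_tmul']
    simp [Module.Basis.coord_apply]
  have hR : ∑ m, ∑ n, (LinearMap.smulRight (b.coord m) (b n)) ⊗ₜ[k]
        (LinearMap.smulRight (b.coord n ∘ₗ v) (u (b m)))
      = ∑ m, ∑ n, ∑ l, ∑ j,
          ((b.coord n) (v (a l)) * (a.coord j) (u (b m))) •
            ((LinearMap.smulRight (b.coord m) (b n)) ⊗ₜ[k]
              (LinearMap.smulRight (a.coord l) (a j))) := by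
    refine Finset.sum_congr rfl fun m _ => Finset.sum_congr rfl fun n _ => ?_
    rw [sr_expand a a (b.coord n ∘ₗ v) (u (b m)), TensorProduct.tmul_sum]
    refine Finset.sum_congr rfl fun l _ => ?_
    rw [TensorProduct.tmul_sum]
    refine Finset.sum_congr rfl fun j _ => ?_
    rw [TensorProduct.tmul_smul]
    simp [Module.Basis.coord_apply]
  rw [hL, hR, sum_comm4]
  refine Finset.sum_congr rfl fun n _ => Finset.sum_congr rfl fun m _ =>
    Finset.sum_congr rfl fun l _ => Finset.sum_congr rfl fun j _ => ?_
  rw [mul_comm]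

section Nat
variable {M N P M' N' P' : Type u}
variable [AddCommGroup M] [Module k M] [AddCommGroup N] [Module k N]
variable [AddCommGroup P] [Module k P] [AddCommGroup M'] [Module k M']
variable [AddCommGroup N'] [Module k N'] [AddCommGroup P'] [Module k P']

lemma assoc_naturality (f : M →ₗ[k] M') (g : N →ₗ[k] N') (h : P →ₗ[k] P') :
    (TensorProduct.assoc k M' N' P').toLinearMap ∘ₗ
        TensorProduct.map (TensorProduct.map f g) h =
      TensorProduct.map f (TensorProduct.map g h) ∘ₗ
        (TensorProduct.assoc k M N P).toLinearMap := by
  refine TensorProduct.ext_threefold fun x y z => ?_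
  simp

lemma lid_naturality (f : M →ₗ[k] N) :
    (TensorProduct.lid k N).toLinearMap ∘ₗ TensorProduct.map LinearMap.id f =
      f ∘ₗ (TensorProduct.lid k M).toLinearMap := by
  refine TensorProduct.ext' fun c x => ?_
  simp

lemma rid_naturality (f : M →ₗ[k] N) :
    (TensorProduct.rid k N).toLinearMap ∘ₗ TensorProduct.map f LinearMap.id =
      f ∘ₗ (TensorProduct.rid k M).toLinearMap := by
  refine TensorProduct.ext' fun x c => ?_
  simp

end Nat

end Tann
end TannHelpers

variable (C : Type u) [SmallCategory C] (X : C ⥤ ModuleCat.{u} k)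

/-- The direct sum `⊕_{C} End_k(X(C))`. -/
abbrev EndSum := ⨁ (c : C), (X.obj c →ₗ[k] X.obj c)

/-- The subspace of `⊕_{C} End_k(X(C))` spanned by all `(h ∘ X(f))_A − (X(f) ∘ h)_B`,
for `f : A ⟶ B` in `C` and `h ∈ Hom_k(X(B), X(A))`. -/
def endRel : Submodule k (EndSum k C X) :=
  Submodule.span k
    { v | ∃ (A B : C) (f : A ⟶ B) (h : X.obj B →ₗ[k] X.obj A),
        v = DirectSum.lof k C (fun c => X.obj c →ₗ[k] X.obj c) A
              (h ∘ₗ ((X.map f).hom : X.obj A →ₗ[k] X.obj B)) -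
            DirectSum.lof k C (fun c => X.obj c →ₗ[k] X.obj c) B
              (((X.map f).hom : X.obj A →ₗ[k] X.obj B) ∘ₗ h) }

/-- The coend `Eňd(X)`, realized as the quotient of `⊕_{C} End_k(X(C))` by the
dinaturality relations. -/
def EndCheck := EndSum k C X ⧸ endRel k C X

instance : AddCommGroup (EndCheck k C X) :=
  inferInstanceAs (AddCommGroup (EndSum k C X ⧸ endRel k C X))

instance : Module k (EndCheck k C X) :=
  inferInstanceAs (Module k (EndSum k C X ⧸ endRel k C X))

/-- The canonical map `End_k(X(C)) → Eňd(X)`, `h ↦ [h]`. -/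
def endMk (c : C) : (X.obj c →ₗ[k] X.obj c) →ₗ[k] EndCheck k C X :=
  (endRel k C X).mkQ ∘ₗ DirectSum.lof k C (fun c => X.obj c →ₗ[k] X.obj c) c


section TannAux
open Tann
variable [∀ c : C, FiniteDimensional k (X.obj c)]

def tannD : EndSum k C X →ₗ[k] (EndCheck k C X ⊗[k] EndCheck k C X) :=
  DirectSum.toModule k C _ fun c =>
    TensorProduct.map (endMk k C X c) (endMk k C X c) ∘ₗ matrixComul k (X.obj c)

def tannE : EndSum k C X →ₗ[k] k :=
  DirectSum.toModule k C _ fun c => LinearMap.trace k (X.obj c)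

lemma endMk_rel {A B : C} (f : A ⟶ B) (u : X.obj B →ₗ[k] X.obj A) :
    endMk k C X A (u ∘ₗ ((X.map f).hom : X.obj A →ₗ[k] X.obj B)) =
      endMk k C X B (((X.map f).hom : X.obj A →ₗ[k] X.obj B) ∘ₗ u) := by
  simp only [endMk, LinearMap.comp_apply]
  exact (Submodule.Quotient.eq _).2 (Submodule.subset_span ⟨A, B, f, u, rfl⟩)

lemma tannD_comm {A B : C} (f : A ⟶ B) (h : X.obj B →ₗ[k] X.obj A) :
    TensorProduct.map (endMk k C X A) (endMk k C X A)
      (matrixComul k (X.obj A) (h ∘ₗ ((X.map f).hom : X.obj A →ₗ[k] X.obj B))) =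
    TensorProduct.map (endMk k C X B) (endMk k C X B)
      (matrixComul k (X.obj B) (((X.map f).hom : X.obj A →ₗ[k] X.obj B) ∘ₗ h)) := by
  set F : X.obj A →ₗ[k] X.obj B := ((X.map f).hom : X.obj A →ₗ[k] X.obj B) with hF
  set a := Module.finBasis k (X.obj A) with ha
  set b := Module.finBasis k (X.obj B) with hb
  have hL : TensorProduct.map (endMk k C X A) (endMk k C X A)
        (matrixComul k (X.obj A) (h ∘ₗ F))
      = ∑ j, ∑ l, (endMk k C X B (LinearMap.smulRight (a.coord j ∘ₗ h) (F (a l)))) ⊗ₜ[k]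
          (endMk k C X A (LinearMap.smulRight (a.coord l) (a j))) := by
    rw [matrixComul_eq_B, map_sum]
    refine Finset.sum_congr rfl fun j _ => ?_
    rw [map_sum]
    refine Finset.sum_congr rfl fun l _ => ?_
    rw [TensorProduct.map_tmul]
    congr 1
    rw [← LinearMap.comp_assoc, endMk_rel k C X f, sr_comp, comp_sr]
  have hR : TensorProduct.map (endMk k C X B) (endMk k C X B)
        (matrixComul k (X.obj B) (F ∘ₗ h))
      = ∑ i, ∑ l, (endMk k C X B (LinearMap.smulRight (b.coord i) (b l))) ⊗ₜ[k]
          (endMk k C X A (LinearMap.smulRight (b.coord l ∘ₗ F) (h (b i)))) := by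
    rw [matrixComul_eq_A, map_sum]
    refine Finset.sum_congr rfl fun i _ => ?_
    rw [map_sum]
    refine Finset.sum_congr rfl fun l _ => ?_
    rw [TensorProduct.map_tmul]
    congr 1
    rw [LinearMap.comp_assoc, ← endMk_rel k C X f (h ∘ₗ LinearMap.smulRight (b.coord l) (b i)),
      LinearMap.comp_assoc, sr_comp, comp_sr]
  rw [hL, hR]
  have key := Tann.exchange a b h F
  calc ∑ j, ∑ l, (endMk k C X B (LinearMap.smulRight (a.coord j ∘ₗ h) (F (a l)))) ⊗ₜ[k]
          (endMk k C X A (LinearMap.smulRight (a.coord l) (a j)))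
      = TensorProduct.map (endMk k C X B) (endMk k C X A)
          (∑ j, ∑ l, (LinearMap.smulRight (a.coord j ∘ₗ h) (F (a l))) ⊗ₜ[k]
            (LinearMap.smulRight (a.coord l) (a j))) := by
        rw [map_sum]
        refine Finset.sum_congr rfl fun j _ => ?_
        rw [map_sum]
        exact Finset.sum_congr rfl fun l _ => (TensorProduct.map_tmul _ _ _ _).symm
    _ = TensorProduct.map (endMk k C X B) (endMk k C X A)
          (∑ m, ∑ n, (LinearMap.smulRight (b.coord m) (b n)) ⊗ₜ[k]
            (LinearMap.smulRight (b.coord n ∘ₗ F) (h (b m)))) := by rw [key]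
    _ = ∑ i, ∑ l, (endMk k C X B (LinearMap.smulRight (b.coord i) (b l))) ⊗ₜ[k]
          (endMk k C X A (LinearMap.smulRight (b.coord l ∘ₗ F) (h (b i)))) := by
        rw [map_sum]
        refine Finset.sum_congr rfl fun m _ => ?_
        rw [map_sum]
        exact Finset.sum_congr rfl fun n _ => TensorProduct.map_tmul _ _ _ _

lemma rel_le_ker_tannD : endRel k C X ≤ LinearMap.ker (tannD k C X) := by
  rw [endRel, Submodule.span_le]
  rintro v ⟨A, B, f, h, rfl⟩
  simp only [SetLike.mem_coe, LinearMap.mem_ker, map_sub, sub_eq_zero, tannD,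
    DirectSum.toModule_lof, LinearMap.comp_apply]
  exact tannD_comm k C X f h

lemma rel_le_ker_tannE : endRel k C X ≤ LinearMap.ker (tannE k C X) := by
  rw [endRel, Submodule.span_le]
  rintro v ⟨A, B, f, h, rfl⟩
  simp only [SetLike.mem_coe, LinearMap.mem_ker, map_sub, sub_eq_zero, tannE,
    DirectSum.toModule_lof]
  exact LinearMap.trace_comp_comm' _ _

def tannDelta : EndCheck k C X →ₗ[k] (EndCheck k C X ⊗[k] EndCheck k C X) :=
  (endRel k C X).liftQ (tannD k C X) (rel_le_ker_tannD k C X)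

def tannEps : EndCheck k C X →ₗ[k] k :=
  (endRel k C X).liftQ (tannE k C X) (rel_le_ker_tannE k C X)

lemma tannDelta_comp (c : C) : tannDelta k C X ∘ₗ endMk k C X c =
    TensorProduct.map (endMk k C X c) (endMk k C X c) ∘ₗ matrixComul k (X.obj c) := by
  ext h
  change tannD k C X (DirectSum.lof k C (fun c => X.obj c →ₗ[k] X.obj c) c h) = _
  simp [tannD, DirectSum.toModule_lof, endMk]

lemma tannEps_comp (c : C) : tannEps k C X ∘ₗ endMk k C X c = LinearMap.trace k (X.obj c) := by
  ext h
  change tannE k C X (DirectSum.lof k C (fun c => X.obj c →ₗ[k] X.obj c) c h) = _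
  simp [tannE, DirectSum.toModule_lof, endMk]

lemma endCheck_hom_ext {Y : Type u} [AddCommGroup Y] [Module k Y]
    (F G : EndCheck k C X →ₗ[k] Y)
    (hfg : ∀ c : C, F ∘ₗ endMk k C X c = G ∘ₗ endMk k C X c) : F = G := by
  refine Submodule.linearMap_qext _ (DirectSum.linearMap_ext _ fun c => ?_)
  exact hfg c

end TannAux

/-- Tannaka: for a functor `X : C ⥤ Vect_k` with finite-dimensional values, there is a
unique coalgebra structure `(Δ, ε)` on the coend `Eňd(X)` such that every canonical map
`End_k(X(C)) → Eňd(X)` is a morphism of coalgebras, where `End_k(V)` carries its standard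
matrix coalgebra structure (`Δ(e^i_j) = Σ_l e^i_l ⊗ e^l_j`, counit the trace). In
particular `Δ[e^i_j] = Σ_l [e^i_l] ⊗ [e^l_j]` and `ε[h] = Tr(h)`. -/
theorem endCheck_unique_coalgebra [∀ c : C, FiniteDimensional k (X.obj c)] :
    ∃! p : (EndCheck k C X →ₗ[k] (EndCheck k C X ⊗[k] EndCheck k C X)) ×
        (EndCheck k C X →ₗ[k] k),
      -- coassociativity
      ((TensorProduct.assoc k (EndCheck k C X) (EndCheck k C X) (EndCheck k C X)).toLinearMap
          ∘ₗ TensorProduct.map p.1 LinearMap.id ∘ₗ p.1 =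
        TensorProduct.map LinearMap.id p.1 ∘ₗ p.1) ∧
      -- left and right counit laws
      ((TensorProduct.lid k (EndCheck k C X)).toLinearMap
          ∘ₗ TensorProduct.map p.2 LinearMap.id ∘ₗ p.1 = LinearMap.id) ∧
      ((TensorProduct.rid k (EndCheck k C X)).toLinearMap
          ∘ₗ TensorProduct.map LinearMap.id p.2 ∘ₗ p.1 = LinearMap.id) ∧
      -- each canonical map is a morphism of coalgebras
      (∀ c : C, p.1 ∘ₗ endMk k C X c =
        TensorProduct.map (endMk k C X c) (endMk k C X c) ∘ₗ matrixComul k (X.obj c)) ∧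
      (∀ c : C, p.2 ∘ₗ endMk k C X c = LinearMap.trace k (X.obj c)) := by
  classical
  refine ⟨⟨tannDelta k C X, tannEps k C X⟩, ⟨?_, ?_, ?_, fun c => tannDelta_comp k C X c,
    fun c => tannEps_comp k C X c⟩, ?_⟩
  · -- coassociativity
    refine endCheck_hom_ext k C X _ _ fun c => ?_
    simp only [LinearMap.comp_assoc]
    rw [tannDelta_comp k C X c]
    have hsplit : TensorProduct.map (TensorProduct.map (endMk k C X c) (endMk k C X c) ∘ₗ matrixComul k (X.obj c)) (endMk k C X c)
        = TensorProduct.map (TensorProduct.map (endMk k C X c) (endMk k C X c)) (endMk k C X c) ∘ₗ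
            TensorProduct.map (matrixComul k (X.obj c)) LinearMap.id := by
      rw [← TensorProduct.map_comp, LinearMap.comp_id]
    conv_lhs =>
      rw [← LinearMap.comp_assoc (matrixComul k (X.obj c)) (TensorProduct.map (endMk k C X c) (endMk k C X c))
            (TensorProduct.map (tannDelta k C X) LinearMap.id),
        ← TensorProduct.map_comp (tannDelta k C X) (LinearMap.id : EndCheck k C X →ₗ[k] EndCheck k C X) (endMk k C X c) (endMk k C X c),
        LinearMap.id_comp, tannDelta_comp k C X c, hsplit,
        LinearMap.comp_assoc (matrixComul k (X.obj c)) (TensorProduct.map (matrixComul k (X.obj c)) LinearMap.id)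
          (TensorProduct.map (TensorProduct.map (endMk k C X c) (endMk k C X c)) (endMk k C X c)),
        ← LinearMap.comp_assoc (TensorProduct.map (matrixComul k (X.obj c)) LinearMap.id ∘ₗ matrixComul k (X.obj c))
          (TensorProduct.map (TensorProduct.map (endMk k C X c) (endMk k C X c)) (endMk k C X c))
          (TensorProduct.assoc k (EndCheck k C X) (EndCheck k C X) (EndCheck k C X)).toLinearMap,
        Tann.assoc_naturality (endMk k C X c) (endMk k C X c) (endMk k C X c),
        LinearMap.comp_assoc (TensorProduct.map (matrixComul k (X.obj c)) LinearMap.id ∘ₗ matrixComul k (X.obj c))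
          (TensorProduct.assoc k (X.obj c →ₗ[k] X.obj c) (X.obj c →ₗ[k] X.obj c) (X.obj c →ₗ[k] X.obj c)).toLinearMap
          (TensorProduct.map (endMk k C X c) (TensorProduct.map (endMk k C X c) (endMk k C X c))),
        Tann.matrix_coassoc,
        ← LinearMap.comp_assoc (matrixComul k (X.obj c)) (TensorProduct.map LinearMap.id (matrixComul k (X.obj c)))
          (TensorProduct.map (endMk k C X c) (TensorProduct.map (endMk k C X c) (endMk k C X c))),
        ← TensorProduct.map_comp (endMk k C X c) (TensorProduct.map (endMk k C X c) (endMk k C X c)) (LinearMap.id : (X.obj c →ₗ[k] X.obj c) →ₗ[k] (X.obj c →ₗ[k] X.obj c)) (matrixComul k (X.obj c)),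
        LinearMap.comp_id, ← tannDelta_comp k C X c]
    conv_rhs =>
      rw [← LinearMap.comp_assoc (matrixComul k (X.obj c)) (TensorProduct.map (endMk k C X c) (endMk k C X c))
            (TensorProduct.map LinearMap.id (tannDelta k C X)),
        ← TensorProduct.map_comp (LinearMap.id : EndCheck k C X →ₗ[k] EndCheck k C X) (tannDelta k C X) (endMk k C X c) (endMk k C X c),
        LinearMap.id_comp]
  · -- left counit law
    refine endCheck_hom_ext k C X _ _ fun c => ?_
    simp only [LinearMap.comp_assoc]
    rw [tannDelta_comp k C X c, LinearMap.id_comp]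
    have hsplit2 : TensorProduct.map (LinearMap.id : k →ₗ[k] k) (endMk k C X c) ∘ₗ TensorProduct.map (LinearMap.trace k (X.obj c)) LinearMap.id
        = TensorProduct.map (LinearMap.trace k (X.obj c)) (endMk k C X c) := by
      rw [← TensorProduct.map_comp, LinearMap.id_comp, LinearMap.comp_id]
    conv_lhs =>
      rw [← LinearMap.comp_assoc (matrixComul k (X.obj c)) (TensorProduct.map (endMk k C X c) (endMk k C X c))
            (TensorProduct.map (tannEps k C X) LinearMap.id),
        ← TensorProduct.map_comp (tannEps k C X) (LinearMap.id : EndCheck k C X →ₗ[k] EndCheck k C X) (endMk k C X c) (endMk k C X c),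
        LinearMap.id_comp, tannEps_comp k C X c, ← hsplit2,
        LinearMap.comp_assoc (matrixComul k (X.obj c)) (TensorProduct.map (LinearMap.trace k (X.obj c)) LinearMap.id)
          (TensorProduct.map (LinearMap.id : k →ₗ[k] k) (endMk k C X c)),
        ← LinearMap.comp_assoc (TensorProduct.map (LinearMap.trace k (X.obj c)) LinearMap.id ∘ₗ matrixComul k (X.obj c))
          (TensorProduct.map (LinearMap.id : k →ₗ[k] k) (endMk k C X c)) (TensorProduct.lid k (EndCheck k C X)).toLinearMap,
        Tann.lid_naturality (endMk k C X c),
        LinearMap.comp_assoc (TensorProduct.map (LinearMap.trace k (X.obj c)) LinearMap.id ∘ₗ matrixComul k (X.obj c))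
          (TensorProduct.lid k (X.obj c →ₗ[k] X.obj c)).toLinearMap (endMk k C X c),
        Tann.matrix_counit_left, LinearMap.comp_id]
  · -- right counit law
    refine endCheck_hom_ext k C X _ _ fun c => ?_
    simp only [LinearMap.comp_assoc]
    rw [tannDelta_comp k C X c, LinearMap.id_comp]
    have hsplit3 : TensorProduct.map (endMk k C X c) (LinearMap.id : k →ₗ[k] k) ∘ₗ TensorProduct.map LinearMap.id (LinearMap.trace k (X.obj c))
        = TensorProduct.map (endMk k C X c) (LinearMap.trace k (X.obj c)) := by
      rw [← TensorProduct.map_comp, LinearMap.id_comp, LinearMap.comp_id]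
    conv_lhs =>
      rw [← LinearMap.comp_assoc (matrixComul k (X.obj c)) (TensorProduct.map (endMk k C X c) (endMk k C X c))
            (TensorProduct.map LinearMap.id (tannEps k C X)),
        ← TensorProduct.map_comp (LinearMap.id : EndCheck k C X →ₗ[k] EndCheck k C X) (tannEps k C X) (endMk k C X c) (endMk k C X c),
        LinearMap.id_comp, tannEps_comp k C X c, ← hsplit3,
        LinearMap.comp_assoc (matrixComul k (X.obj c)) (TensorProduct.map LinearMap.id (LinearMap.trace k (X.obj c)))
          (TensorProduct.map (endMk k C X c) (LinearMap.id : k →ₗ[k] k)),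
        ← LinearMap.comp_assoc (TensorProduct.map LinearMap.id (LinearMap.trace k (X.obj c)) ∘ₗ matrixComul k (X.obj c))
          (TensorProduct.map (endMk k C X c) (LinearMap.id : k →ₗ[k] k)) (TensorProduct.rid k (EndCheck k C X)).toLinearMap,
        Tann.rid_naturality (endMk k C X c),
        LinearMap.comp_assoc (TensorProduct.map LinearMap.id (LinearMap.trace k (X.obj c)) ∘ₗ matrixComul k (X.obj c))
          (TensorProduct.rid k (X.obj c →ₗ[k] X.obj c)).toLinearMap (endMk k C X c),
        Tann.matrix_counit_right, LinearMap.comp_id]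
  · -- uniqueness
    rintro ⟨D, Ep⟩ ⟨-, -, -, h4, h5⟩
    have hD : D = tannDelta k C X :=
      endCheck_hom_ext k C X _ _ fun c => by rw [h4 c, tannDelta_comp k C X c]
    have hE : Ep = tannEps k C X :=
      endCheck_hom_ext k C X _ _ fun c => by rw [h5 c, tannEps_comp k C X c]
    exact Prod.ext hD hE



end
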